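/- Let n ≥ 1 and e = (1,0,…,0) ∈ ℝⁿ. For all t ∈ [−1,1] and x ∈ S^{n−1}, one has F(t, x/2) + (1 − ‖e + x/2‖²)·e ≠ 0, where F(t,(t₁,…,t_n)) = (t·t₁, t₂, …, t_n). -/

import Mathlib

/-- F(t,(t₁,…,t_n)) = (t·t₁, t₂, …, t_n): rescaling of the first coordinate. -/
noncomputable def scaleFirst {n : ℕ} (t : ℝ) (y : EuclideanSpace ℝ (Fin n)) :
    EuclideanSpace ℝ (Fin n) :=
  WithLp.toLp 2 (fun i : Fin n => if (i : ℕ) = 0 then t * y i else y i)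

/-- For all t ∈ [−1,1] and x ∈ S^{n−1}, F(t, x/2) + (1 − ‖e + x/2‖²)·e ≠ 0, where
e = (1,0,…,0). -/
theorem homotopy_nonvanishing_three (n : ℕ) (hn : 1 ≤ n) (t : ℝ) (ht : t ∈ Set.Icc (-1 : ℝ) 1)
    (x : EuclideanSpace ℝ (Fin n)) (hx : ‖x‖ = 1) :
    let e : EuclideanSpace ℝ (Fin n) := EuclideanSpace.single (⟨0, hn⟩ : Fin n) (1 : ℝ)
    scaleFirst t ((2 : ℝ)⁻¹ • x) + (1 - ‖e + (2 : ℝ)⁻¹ • x‖ ^ 2) • e ≠ 0 := by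
  intro e h
  set i0 : Fin n := ⟨0, hn⟩ with hi0
  -- coordinates i ≠ 0 vanish
  have hyi : ∀ i : Fin n, i ≠ i0 → x i = 0 := by
    intro i hi
    have hi' : (i : ℕ) ≠ 0 := by
      simpa [hi0, Fin.ext_iff] using hi
    have hc := congrArg (fun v : EuclideanSpace ℝ (Fin n) => v i) h
    simp [scaleFirst, hi', PiLp.add_apply, PiLp.smul_apply, e,
      EuclideanSpace.single_apply, hi] at hc
    have hi2 : i ≠ ⟨0, hn⟩ := hi
    simpa [hi2] using hc
  -- inner product ⟪e, x⟫ = x i0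
  have hinner : (inner ℝ e ((2:ℝ)⁻¹ • x) : ℝ) = 2⁻¹ * x i0 := by
    simp [e, EuclideanSpace.inner_single_left, real_inner_smul_right, hi0]
  have hne : ‖e‖ = 1 := by simp [e]
  have hny : ‖(2:ℝ)⁻¹ • x‖ = 2⁻¹ := by
    rw [norm_smul, hx]; norm_num
  have hnorm2 : ‖e + (2:ℝ)⁻¹ • x‖ ^ 2 = 5/4 + x i0 := by
    rw [norm_add_sq_real, hinner, hne, hny]; ring
  -- first coordinate equation
  have hc0 := congrArg (fun v : EuclideanSpace ℝ (Fin n) => v i0) h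
  simp [scaleFirst, hi0, PiLp.add_apply, PiLp.smul_apply, e,
    EuclideanSpace.single_apply, hnorm2] at hc0
  -- norm gives (x i0)^2 = 1
  have hsum : (∑ i, x i ^ 2) = 1 := by
    have := hx
    rw [EuclideanSpace.norm_eq] at this
    have hnn : (0:ℝ) ≤ ∑ i, ‖x i‖ ^ 2 := Finset.sum_nonneg fun i _ => sq_nonneg _
    have h2 : (∑ i, ‖x i‖ ^ 2) = 1 := by
      rw [← Real.sq_sqrt hnn, this]; norm_num
    simpa [sq_abs] using h2
  have hx0 : x i0 ^ 2 = 1 := by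
    rw [← hsum, Finset.sum_eq_single i0]
    · intro i _ hi; simp [hyi i hi]
    · intro hi; simp at hi
  obtain ⟨ht1, ht2⟩ := ht
  nlinarith [hc0, hx0, sq_nonneg (x i0), sq_nonneg (t + 1), sq_nonneg (t - 1)]
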